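/- Let $\tau$ be a primitive Pisot substitution with dominant eigenvalue $\lambda$, and suppose there exists $C > 0$ such that for all words $u, v$ of the same length occurring in $X_\tau$ and each letter $a$, $\big||u|_a - |v|_a\big| < C$ (letter-balancedness). Then $\tau$ has balanced growth as a dill map on $X_\tau$: there exists $D \in \mathbb{N}$ such that $\big| |\tau(w)| - \lambda |w| \big| \le D$ for every word $w$ occurring in $X_\tau$. -/

import Mathlib

open Filter Topology

section Defs

variable {A : Type*} {B : Type*} {C : Type*}

/-- The one-sided shift map. -/
def shift (x : ℕ → A) : ℕ → A := fun n => x (n + 1)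

/-- A (one-sided) subshift: a closed, shift-invariant set of configurations. -/
def Subshift [TopologicalSpace A] (X : Set (ℕ → A)) : Prop :=
  IsClosed X ∧ ∀ x ∈ X, shift x ∈ X

/-- `X` is uniformly recurrent: every pattern occurring in `X` occurs in every
sufficiently long window of every point of `X`. -/
def UniformlyRecurrent (X : Set (ℕ → A)) : Prop :=
  ∀ x ∈ X, ∀ l : ℕ, ∃ N : ℕ, ∀ y ∈ X, ∃ i < N, ∀ k < l, y (i + k) = x k

/-- A block map: a continuous shift-commuting map. -/
def BlockMap [TopologicalSpace A] [TopologicalSpace B] (X : Set (ℕ → A)) (Y : Set (ℕ → B))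
    (f : (ℕ → A) → (ℕ → B)) : Prop :=
  Set.MapsTo f X Y ∧ ContinuousOn f X ∧ ∀ x ∈ X, f (shift x) = shift (f x)

/-- `s` is a cocycle for `Φ` on `X`: `Φ (σ x) = σ^(s x) (Φ x)`. -/
def IsCocycle (X : Set (ℕ → A)) (Φ : (ℕ → A) → (ℕ → B)) (s : (ℕ → A) → ℕ) : Prop :=
  ∀ x ∈ X, ∀ n : ℕ, Φ (shift x) n = Φ x (n + s x)

/-- A dill map: a continuous map with a continuous cocycle which is nontrivial
along every orbit. -/
def DillMap [TopologicalSpace A] [TopologicalSpace B] (X : Set (ℕ → A)) (Y : Set (ℕ → B))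
    (Φ : (ℕ → A) → (ℕ → B)) : Prop :=
  Set.MapsTo Φ X Y ∧ ContinuousOn Φ X ∧
    ∃ s : (ℕ → A) → ℕ, ContinuousOn s X ∧ IsCocycle X Φ s ∧
      ∀ x ∈ X, ∃ n : ℕ, 0 < s (shift^[n] x)

/-- Continuity (local constancy) of a word-valued function on `X`. -/
def WordContinuousOn (φ : (ℕ → A) → List B) (X : Set (ℕ → A)) : Prop :=
  ∀ x ∈ X, ∃ R : ℕ, ∀ y ∈ X, (∀ k ≤ R, y k = x k) → φ y = φ x

/-- `φ` is an implementation of `Φ` on `X`: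
`Φ x = φ x ++ φ (σ x) ++ φ (σ² x) ++ ⋯`, expressed coordinatewise. -/
def IsImplementation (X : Set (ℕ → A)) (Φ : (ℕ → A) → (ℕ → B))
    (φ : (ℕ → A) → List B) : Prop :=
  WordContinuousOn φ X ∧ ∀ x ∈ X, ∀ n : ℕ,
    Φ x n = if h : n < (φ x).length then (φ x).get ⟨n, h⟩
            else Φ (shift x) (n - (φ x).length)

/-- `ⁿφ(x) = φ(x) φ(σ x) ⋯ φ(σ^(n-1) x)`. -/
def iterWord (φ : (ℕ → A) → List B) (x : ℕ → A) : ℕ → List B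
  | 0 => []
  | n + 1 => iterWord φ x n ++ φ (shift^[n] x)

/-- The invariant `Z`: `|ⁿφ(x)|/n → lam` for every `x ∈ X`. -/
def HasZ (X : Set (ℕ → A)) (φ : (ℕ → A) → List B) (lam : ℝ) : Prop :=
  ∀ x ∈ X, Tendsto (fun n : ℕ => ((iterWord φ x n).length : ℝ) / n) atTop (𝓝 lam)

/-- `D` is a deviation bound: `| |ⁿφ(x)| - lam·n | ≤ D` for all `x ∈ X`, `n`. -/
def HasDBound (X : Set (ℕ → A)) (φ : (ℕ → A) → List B) (lam D : ℝ) : Prop :=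
  ∀ x ∈ X, ∀ n : ℕ, |((iterWord φ x n).length : ℝ) - lam * n| ≤ D

/-- `R` is an in-radius bound for `φ` on `X`: `φ x` only depends on `x_[0,R]`. -/
def HasInRadius (X : Set (ℕ → A)) (φ : (ℕ → A) → List B) (R : ℕ) : Prop :=
  ∀ x ∈ X, ∀ y ∈ X, (∀ k ≤ R, x k = y k) → φ x = φ y

/-- Almost equivalence: images of every point agree up to shifts. -/
def AlmostEquiv (X : Set (ℕ → A)) (Φ Ψ : (ℕ → A) → (ℕ → B)) : Prop :=
  ∀ x ∈ X, ∃ i j : ℕ, shift^[i] (Φ x) = shift^[j] (Ψ x)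

/-- The implementation of the composition of two dill maps. -/
def compImpl (φ₁ : (ℕ → A) → List B) (Φ₁ : (ℕ → A) → (ℕ → B))
    (φ₂ : (ℕ → B) → List C) (x : ℕ → A) : List C :=
  iterWord φ₂ (Φ₁ x) (φ₁ x).length

/-- Extension of a substitution to words. -/
def wordApply (τ : A → List A) (w : List A) : List A := (w.map τ).flatten

/-- Iterated image `τⁿ(a)` of a letter. -/
def subPow (τ : A → List A) : ℕ → A → List A
  | 0, a => [a]
  | n + 1, a => wordApply τ (subPow τ n a)

/-- The language of the substitution `τ`: infixes of the `τⁿ(a)`. -/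
def InLanguage (τ : A → List A) (w : List A) : Prop :=
  ∃ a n, w <:+: subPow τ n a

/-- The one-sided subshift of the substitution `τ`. -/
def Xsub (τ : A → List A) : Set (ℕ → A) :=
  {x | ∀ i l : ℕ, InLanguage τ (List.ofFn fun k : Fin l => x (i + k))}

/-- Primitivity of a substitution. -/
def Primitive (τ : A → List A) : Prop :=
  ∃ N, ∀ n ≥ N, ∀ a b : A, a ∈ subPow τ n b

/-- The word `w` occurs in `x` at position `i`. -/
def occursAt (w : List A) (x : ℕ → A) (i : ℕ) : Prop :=
  w = List.ofFn fun k : Fin w.length => x (i + k)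

/-- The action of a (non-erasing) substitution on one-sided configurations. -/
def subApply [Inhabited A] (τ : A → List A) (x : ℕ → A) : ℕ → A :=
  fun n => (wordApply τ (List.ofFn fun k : Fin (n + 1) => x k)).getD n default

end Defs
section MatrixDefs

variable {A : Type*} [Fintype A] [DecidableEq A]

/-- The associated matrix of a substitution. -/
def assocMatrix (τ : A → List A) : Matrix A A ℕ :=
  Matrix.of fun a b => (τ a).count b

/-- The complex spectrum of the associated matrix. -/
noncomputable def specC (τ : A → List A) : Set ℂ :=
  spectrum ℂ ((assocMatrix τ).map (fun n : ℕ => (n : ℂ)))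

/-- The Pisot property: one eigenvalue of modulus `> 1`, all others of modulus `< 1`. -/
def PisotSub (τ : A → List A) : Prop :=
  ∃ μ ∈ specC τ, 1 < ‖μ‖ ∧ ∀ ν ∈ specC τ, ν ≠ μ → ‖ν‖ < 1

/-- `lam` is the dominant eigenvalue of the associated matrix of `τ`. -/
def DominantEig (τ : A → List A) (lam : ℝ) : Prop :=
  (lam : ℂ) ∈ specC τ ∧ ∀ μ ∈ specC τ, μ ≠ (lam : ℂ) → ‖μ‖ < lam

end MatrixDefs


section Aux12
variable {A : Type*} [Fintype A] [DecidableEq A]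

omit [Fintype A] [DecidableEq A] in
lemma aux_wordApply_append (τ : A → List A) (u v : List A) :
    wordApply τ (u ++ v) = wordApply τ u ++ wordApply τ v := by
  simp [wordApply]

lemma aux_sum_over_word (w : List A) (f : A → ℕ) :
    (w.map f).sum = ∑ a : A, w.count a * f a := by
  induction w with
  | nil => simp
  | cons c w ih =>
    simp only [List.map_cons, List.sum_cons, ih, List.count_cons, add_mul,
      Finset.sum_add_distrib, ite_mul, one_mul, zero_mul, beq_iff_eq]
    rw [Finset.sum_ite_eq Finset.univ c (fun a => f a)]
    simp [add_comm]

lemma aux_length_wordApply (τ : A → List A) (w : List A) :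
    (wordApply τ w).length = ∑ a : A, w.count a * (τ a).length := by
  rw [wordApply, List.length_flatten, List.map_map, aux_sum_over_word]
  rfl

lemma aux_count_wordApply (τ : A → List A) (w : List A) (b : A) :
    (wordApply τ w).count b = ∑ a : A, w.count a * (τ a).count b := by
  rw [wordApply, List.count_flatten, List.map_map, aux_sum_over_word]
  rfl

lemma aux_sum_count (w : List A) : ∑ a : A, w.count a = w.length := by
  have := aux_sum_over_word w (fun _ => 1)
  simpa using this.symm

lemma aux_pow_apply (τ : A → List A) (n : ℕ) (a b : A) :
    ((assocMatrix τ) ^ n) a b = (subPow τ n a).count b := by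
  induction n generalizing b with
  | zero => simp [subPow, Matrix.one_apply, List.count_singleton', eq_comm]
  | succ n ih =>
    rw [pow_succ, Matrix.mul_apply]
    show _ = (wordApply τ (subPow τ n a)).count b
    rw [aux_count_wordApply]
    refine Finset.sum_congr rfl fun c _ => ?_
    have hc : ((assocMatrix τ) ^ n) a c = (subPow τ n a).count c := ih c
    rw [hc]
    rfl

lemma aux_map_pow (τ : A → List A) (n : ℕ) :
    ((assocMatrix τ).map (fun k : ℕ => (k : ℂ))) ^ n
      = ((assocMatrix τ) ^ n).map (fun k : ℕ => (k : ℂ)) := by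
  have hf : (fun k : ℕ => (k : ℂ)) = ⇑(Nat.castRingHom ℂ) := rfl
  induction n with
  | zero => rw [pow_zero, pow_zero, hf, Matrix.map_one] <;> simp
  | succ n ih => rw [pow_succ, pow_succ, ih, hf, Matrix.map_mul]

lemma aux_mem_specC_iff_det (τ : A → List A) (μ : ℂ) :
    μ ∈ specC τ ↔ (μ • (1 : Matrix A A ℂ) - (assocMatrix τ).map (fun k : ℕ => (k : ℂ))).det = 0 := by
  rw [specC, spectrum.mem_iff, Algebra.algebraMap_eq_smul_one, Matrix.isUnit_iff_isUnit_det,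
    isUnit_iff_ne_zero, not_not]

lemma aux_eigvec_of_mem (τ : A → List A) (μ : ℂ) (h : μ ∈ specC τ) :
    ∃ v : A → ℂ, v ≠ 0 ∧
      ((assocMatrix τ).map (fun k : ℕ => (k : ℂ))).mulVec v = μ • v := by
  rw [aux_mem_specC_iff_det] at h
  obtain ⟨v, hv, hv0⟩ := Matrix.exists_mulVec_eq_zero_iff.mpr h
  refine ⟨v, hv, ?_⟩
  rw [Matrix.sub_mulVec, Matrix.smul_mulVec, Matrix.one_mulVec, sub_eq_zero] at hv0
  exact hv0.symm

lemma aux_mem_of_left_eigvec (τ : A → List A) (μ : ℂ) (v : A → ℂ) (hv : v ≠ 0)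
    (h : ∀ b, ∑ a, v a * ((assocMatrix τ).map (fun k : ℕ => (k : ℂ))) a b = μ * v b) :
    μ ∈ specC τ := by
  rw [aux_mem_specC_iff_det]
  rw [← Matrix.det_transpose]
  refine Matrix.exists_mulVec_eq_zero_iff.mp ⟨v, hv, ?_⟩
  funext b
  simp only [Matrix.mulVec, dotProduct, Matrix.transpose_apply, Matrix.sub_apply,
    Matrix.smul_apply, Matrix.one_apply, Pi.zero_apply, sub_mul, smul_eq_mul]
  rw [Finset.sum_sub_distrib, sub_eq_zero]
  have h1 : ∑ a, (μ * if a = b then 1 else 0) * v a = μ * v b := by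
    simp [mul_ite, ite_mul, Finset.sum_ite_eq']
  rw [h1, ← h b]
  exact (Finset.sum_congr rfl fun a _ => by rw [mul_comm (v a)]).symm

/-- From a spectral value, a fixed letter whose iterates grow at rate `|μ|ⁿ`. -/
lemma aux_growth_lower (τ : A → List A) (μ : ℂ) (h : μ ∈ specC τ) :
    ∃ a : A, ∀ n : ℕ, ‖μ‖ ^ n ≤ ((subPow τ n a).length : ℝ) := by
  obtain ⟨v, hv, hmv⟩ := aux_eigvec_of_mem τ μ h
  have hne : ∃ a, v a ≠ 0 := by
    by_contra hcon
    push_neg at hcon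
    exact hv (funext hcon)
  obtain ⟨a1, ha1⟩ := hne
  haveI : Nonempty A := ⟨a1⟩
  obtain ⟨a, -, ha⟩ := Finset.exists_max_image Finset.univ (fun a => ‖v a‖)
    ⟨a1, Finset.mem_univ a1⟩
  have hva : 0 < ‖v a‖ :=
    lt_of_lt_of_le (by simpa using ha1) (ha a1 (Finset.mem_univ a1))
  refine ⟨a, fun n => ?_⟩
  have hpow : (((assocMatrix τ).map (fun k : ℕ => (k : ℂ))) ^ n).mulVec v = μ ^ n • v := by
    induction n with
    | zero => simp
    | succ n ih =>
      rw [pow_succ, ← Matrix.mulVec_mulVec, hmv, Matrix.mulVec_smul, ih, pow_succ]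
      rw [smul_smul, mul_comm]
  have hentry : μ ^ n * v a = ∑ b, (((assocMatrix τ) ^ n) a b : ℂ) * v b := by
    have := congrFun hpow a
    rw [aux_map_pow] at this
    simpa [Matrix.mulVec, dotProduct, Matrix.map_apply] using this.symm
  have habs : ‖μ‖ ^ n * ‖v a‖
      ≤ (∑ b, (((assocMatrix τ) ^ n) a b : ℝ)) * ‖v a‖ := by
    rw [← norm_pow, ← norm_mul, hentry, Finset.sum_mul]
    refine le_trans (norm_sum_le _ _) (Finset.sum_le_sum fun b _ => ?_)
    rw [norm_mul]
    have : ‖((((assocMatrix τ) ^ n) a b : ℕ) : ℂ)‖ = (((assocMatrix τ) ^ n) a b : ℝ) := by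
      rw [Complex.norm_natCast]
    rw [this]
    exact mul_le_mul_of_nonneg_left (ha b (Finset.mem_univ b)) (Nat.cast_nonneg _)
  have hsum : (∑ b, (((assocMatrix τ) ^ n) a b : ℝ)) = ((subPow τ n a).length : ℝ) := by
    rw [← Nat.cast_sum]
    norm_cast
    simp only [aux_pow_apply]
    exact aux_sum_count _
  rw [hsum] at habs
  exact le_of_mul_le_mul_right habs hva

omit [Fintype A] [DecidableEq A] in
lemma aux_lang_infix {τ : A → List A} {u w : List A} (h : u <:+: w)
    (hw : InLanguage τ w) : InLanguage τ u := by
  obtain ⟨a, n, hn⟩ := hw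
  exact ⟨a, n, h.trans hn⟩

omit [Fintype A] [DecidableEq A] in
lemma aux_lang_wordApply {τ : A → List A} {w : List A} (hw : InLanguage τ w) :
    InLanguage τ (wordApply τ w) := by
  obtain ⟨a, n, s, t, hst⟩ := hw
  refine ⟨a, n + 1, wordApply τ s, wordApply τ t, ?_⟩
  show _ = wordApply τ (subPow τ n a)
  rw [← hst, aux_wordApply_append, aux_wordApply_append]

omit [Fintype A] [DecidableEq A] in
lemma aux_lang_subPow (τ : A → List A) (n : ℕ) (a : A) : InLanguage τ (subPow τ n a) :=
  ⟨a, n, List.infix_refl _⟩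

/-- Real-number helper: `|x|·n ≤ K` for all `n` forces `x = 0`. -/
lemma aux_eq_zero (x K : ℝ) (h : ∀ n : ℕ, |x| * n ≤ K) : x = 0 := by
  by_contra hx
  have hx0 : 0 < |x| := abs_pos.mpr hx
  obtain ⟨n, hn⟩ := exists_nat_gt (K / |x|)
  have : K < |x| * n := by
    rw [div_lt_iff₀ hx0] at hn
    linarith [hn]
  exact absurd (h n) (not_le.mpr this)

lemma aux_nonneg_of (x K : ℝ) (h : ∀ n : ℕ, -K ≤ x * n) : 0 ≤ x := by
  by_contra hx
  push_neg at hx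
  obtain ⟨n, hn⟩ := exists_nat_gt (K / (-x))
  have h1 : K < (-x) * n := by
    rw [div_lt_iff₀ (by linarith)] at hn
    linarith [hn]
  have := h n
  linarith

lemma aux_almost_additive (f : ℕ → ℝ) (E : ℝ)
    (h : ∀ m n : ℕ, |f (m + n) - f m - f n| ≤ E) :
    ∃ α : ℝ, ∀ n : ℕ, |f n - α * n| ≤ E := by
  have hf0 : |f 0| ≤ E := by have := h 0 0; simpa using this
  have hE : 0 ≤ E := le_trans (abs_nonneg _) hf0
  -- iterated bound
  have hmul : ∀ m n : ℕ, |f (m * n) - m * f n| ≤ (m + 1) * E := by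
    intro m n
    induction m with
    | zero => simpa using hf0
    | succ m ih =>
      have h1 := h (m * n) n
      have heq : (m + 1) * n = m * n + n := by ring
      rw [heq]
      push_cast
      have : |f (m * n + n) - (↑m + 1) * f n|
          ≤ |f (m * n + n) - f (m * n) - f n| + |f (m * n) - ↑m * f n| := by
        rw [show f (m * n + n) - (↑m + 1) * f n
            = (f (m * n + n) - f (m * n) - f n) + (f (m * n) - ↑m * f n) by ring]
        exact abs_add_le _ _
      calc |f (m * n + n) - (↑m + 1) * f n| ≤ _ := this
        _ ≤ E + (↑m + 1) * E := add_le_add h1 ih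
        _ = (↑m + 1 + 1) * E := by ring
  -- pairwise bound on f n / n
  have key : ∀ m n : ℕ, 1 ≤ m → 1 ≤ n →
      |f m / m - f n / n| ≤ E / m + E / n + 2 * E / (m * n) := by
    intro m n hm hn
    have hm0 : (0:ℝ) < m := by exact_mod_cast hm
    have hn0 : (0:ℝ) < n := by exact_mod_cast hn
    have h1 := hmul n m
    have h2 := hmul m n
    rw [show n * m = m * n from Nat.mul_comm n m] at h1
    have h3 : |(n:ℝ) * f m - m * f n| ≤ ((n:ℝ) + 1) * E + ((m:ℝ) + 1) * E := by
      rw [show (n:ℝ) * f m - m * f n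
          = -(f (m * n) - n * f m) + (f (m * n) - m * f n) by ring]
      refine le_trans (abs_add_le _ _) ?_
      rw [abs_neg]
      exact add_le_add h1 h2
    have heq : f m / m - f n / n = ((n:ℝ) * f m - m * f n) / (m * n) := by
      field_simp
    rw [heq, abs_div, abs_of_pos (mul_pos hm0 hn0)]
    rw [div_le_iff₀ (mul_pos hm0 hn0)]
    have hgoal : (E / m + E / n + 2 * E / (m * n)) * (m * n)
        = ((n:ℝ) + 1) * E + ((m:ℝ) + 1) * E := by
      field_simp
      ring
    rw [hgoal]
    exact h3
  -- Cauchy sequence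
  set s : ℕ → ℝ := fun k => f (k + 1) / (k + 1) with hs
  have hcau : CauchySeq s := by
    apply cauchySeq_of_le_tendsto_0 (fun N : ℕ => 4 * E / (N + 1))
    · intro n m N hn hm
      have h1 := key (n+1) (m+1) (Nat.le_add_left 1 n) (Nat.le_add_left 1 m)
      rw [Real.dist_eq]
      have hN : (0:ℝ) < N + 1 := by positivity
      have hn1 : (N:ℝ) + 1 ≤ (n:ℝ) + 1 := by
        have : (N:ℝ) ≤ n := by exact_mod_cast hn
        linarith
      have hm1 : (N:ℝ) + 1 ≤ (m:ℝ) + 1 := by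
        have : (N:ℝ) ≤ m := by exact_mod_cast hm
        linarith
      push_cast at h1
      have e1 : E / ((n:ℝ)+1) ≤ E / ((N:ℝ)+1) := div_le_div_of_nonneg_left hE hN hn1
      have e2 : E / ((m:ℝ)+1) ≤ E / ((N:ℝ)+1) := div_le_div_of_nonneg_left hE hN hm1
      have e3 : 2 * E / (((n:ℝ)+1) * ((m:ℝ)+1)) ≤ 2 * E / ((N:ℝ)+1) := by
        apply div_le_div_of_nonneg_left (by linarith) hN
        have hn0 : (0:ℝ) ≤ n := Nat.cast_nonneg n
        have hm0 : (0:ℝ) ≤ m := Nat.cast_nonneg m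
        nlinarith
      calc |s n - s m| ≤ E / ((n:ℝ)+1) + E / ((m:ℝ)+1) + 2 * E / (((n:ℝ)+1) * ((m:ℝ)+1)) := h1
        _ ≤ E / ((N:ℝ)+1) + E / ((N:ℝ)+1) + 2 * E / ((N:ℝ)+1) := by linarith
        _ = 4 * E / ((N:ℝ)+1) := by ring
    · have : Tendsto (fun N : ℕ => 4 * E * (1 / ((N:ℝ) + 1))) atTop (𝓝 (4 * E * 0)) :=
        tendsto_const_nhds.mul tendsto_one_div_add_atTop_nhds_zero_nat
      simpa [div_eq_mul_inv, mul_comm, mul_assoc, mul_left_comm] using this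
  obtain ⟨α, hα⟩ := cauchySeq_tendsto_of_complete hcau
  refine ⟨α, fun n => ?_⟩
  match n with
  | 0 => simpa using hf0
  | Nat.succ k =>
    have hn1 : 1 ≤ k + 1 := Nat.le_add_left 1 k
    have hn0 : (0:ℝ) < (k:ℝ) + 1 := by positivity
    have hbk : ∀ j : ℕ, |f (k+1) / ((k:ℝ)+1) - α|
        ≤ E / ((k:ℝ)+1) + (E / ((j:ℝ)+1) + 2 * E / (((k:ℝ)+1) * ((j:ℝ)+1)) + |s j - α|) := by
      intro j
      have h1 := key (k+1) (j+1) hn1 (Nat.le_add_left 1 j)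
      push_cast at h1
      have hsj : s j = f (j+1) / ((j:ℝ)+1) := rfl
      calc |f (k+1) / ((k:ℝ)+1) - α|
          ≤ |f (k+1) / ((k:ℝ)+1) - s j| + |s j - α| := abs_sub_le _ _ _
        _ ≤ (E / ((k:ℝ)+1) + E / ((j:ℝ)+1) + 2 * E / (((k:ℝ)+1) * ((j:ℝ)+1))) + |s j - α| := by
            rw [hsj]; exact add_le_add_left h1 _
        _ = E / ((k:ℝ)+1) + (E / ((j:ℝ)+1) + 2 * E / (((k:ℝ)+1) * ((j:ℝ)+1)) + |s j - α|) := by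
            ring
    have t1 : Tendsto (fun j : ℕ => E / ((j:ℝ)+1)) atTop (𝓝 0) := by
      have : Tendsto (fun j : ℕ => E * (1 / ((j:ℝ)+1))) atTop (𝓝 (E * 0)) :=
        tendsto_const_nhds.mul tendsto_one_div_add_atTop_nhds_zero_nat
      simpa [div_eq_mul_inv, mul_comm, mul_assoc, mul_left_comm] using this
    have t2 : Tendsto (fun j : ℕ => 2 * E / (((k:ℝ)+1) * ((j:ℝ)+1))) atTop (𝓝 0) := by
      have h0 : Tendsto (fun j : ℕ => (2 * E / ((k:ℝ)+1)) * (1 / ((j:ℝ)+1))) atTop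
          (𝓝 ((2 * E / ((k:ℝ)+1)) * 0)) :=
        tendsto_const_nhds.mul tendsto_one_div_add_atTop_nhds_zero_nat
      rw [mul_zero] at h0
      refine h0.congr fun j => ?_
      field_simp
    have t3 : Tendsto (fun j : ℕ => |s j - α|) atTop (𝓝 0) := by
      have h0 : Tendsto (fun j : ℕ => s j - α) atTop (𝓝 (α - α)) :=
        hα.sub tendsto_const_nhds
      rw [sub_self] at h0
      simpa using h0.abs
    have tend : Tendsto (fun j : ℕ =>
        E / ((k:ℝ)+1) + (E / ((j:ℝ)+1) + 2 * E / (((k:ℝ)+1) * ((j:ℝ)+1)) + |s j - α|))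
        atTop (𝓝 (E / ((k:ℝ)+1) + (0 + 0 + 0))) :=
      tendsto_const_nhds.add ((t1.add t2).add t3)
    have hle : |f (k+1) / ((k:ℝ)+1) - α| ≤ E / ((k:ℝ)+1) + (0 + 0 + 0) :=
      ge_of_tendsto' tend hbk
    have hle2 : |f (k+1) / ((k:ℝ)+1) - α| ≤ E / ((k:ℝ)+1) := by linarith
    have heq : (f (k+1) / ((k:ℝ)+1) - α) * ((k:ℝ)+1) = f (k+1) - α * ((k:ℝ)+1) := by
      rw [sub_mul, div_mul_cancel₀ _ (ne_of_gt hn0)]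
    have : |f (k+1) - α * ((k:ℝ)+1)| ≤ E := by
      rw [← heq, abs_mul, abs_of_pos hn0]
      calc |f (k+1) / ((k:ℝ)+1) - α| * ((k:ℝ)+1) ≤ (E / ((k:ℝ)+1)) * ((k:ℝ)+1) :=
            mul_le_mul_of_nonneg_right hle2 (le_of_lt hn0)
        _ = E := div_mul_cancel₀ _ (ne_of_gt hn0)
    have hc : ((k+1 : ℕ) : ℝ) = (k:ℝ) + 1 := by push_cast; ring
    rw [hc]
    exact this

end Aux12

/-- a letter-balanced primitive Pisot substitution has balanced
growth as a dill map on its subshift. -/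
theorem stmt12 {A : Type*} [Fintype A] [DecidableEq A]
    (τ : A → List A) (hprim : Primitive τ) (hPisot : PisotSub τ)
    (lam : ℝ) (hdom : DominantEig τ lam)
    (C : ℝ) (hC : 0 < C)
    (hbal : ∀ u v : List A, InLanguage τ u → InLanguage τ v → u.length = v.length →
      ∀ a : A, |((u.count a : ℝ)) - (v.count a : ℝ)| < C) :
    ∃ D : ℕ, ∀ w : List A, InLanguage τ w →
      |(((wordApply τ w).length : ℝ)) - lam * w.length| ≤ D := by
  classical
  obtain ⟨μ, hμmem, hμ1, -⟩ := hPisot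
  obtain ⟨a₀, ha₀⟩ := aux_growth_lower τ μ hμmem
  haveI : Nonempty A := ⟨a₀⟩
  -- words of every length exist in the language
  have hword : ∀ n : ℕ, ∃ w : List A, InLanguage τ w ∧ w.length = n := by
    intro n
    obtain ⟨m, hm⟩ := pow_unbounded_of_one_lt (n : ℝ) hμ1
    have hlen : n ≤ (subPow τ m a₀).length := by
      have h2 := ha₀ m
      exact_mod_cast le_trans (le_of_lt hm) h2
    refine ⟨(subPow τ m a₀).take n,
      aux_lang_infix (List.take_prefix _ _).isInfix (aux_lang_subPow τ m a₀), ?_⟩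
    rw [List.length_take]
    exact Nat.min_eq_left hlen
  choose W hWlang hWlen using hword
  -- almost additivity of letter counts
  have hkey : ∀ a : A, ∀ m n : ℕ,
      |((W (m+n)).count a : ℝ) - ((W m).count a : ℝ) - ((W n).count a : ℝ)| ≤ 2*C := by
    intro a m n
    set u := (W (m+n)).take m with hu_def
    set v := (W (m+n)).drop m with hv_def
    have hu : InLanguage τ u := aux_lang_infix (List.take_prefix _ _).isInfix (hWlang (m+n))
    have hv : InLanguage τ v := aux_lang_infix (List.drop_suffix _ _).isInfix (hWlang (m+n))
    have hul : u.length = m := by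
      rw [hu_def, List.length_take, hWlen]
      exact Nat.min_eq_left (Nat.le_add_right m n)
    have hvl : v.length = n := by
      rw [hv_def, List.length_drop, hWlen]
      omega
    have hsplit : (W (m+n)).count a = u.count a + v.count a := by
      rw [← List.count_append, hu_def, hv_def, List.take_append_drop]
    have h1 := hbal u (W m) hu (hWlang m) (by rw [hul, hWlen]) a
    have h2 := hbal v (W n) hv (hWlang n) (by rw [hvl, hWlen]) a
    rw [hsplit]
    push_cast
    rw [show ((u.count a : ℝ) + (v.count a : ℝ)) - ((W m).count a : ℝ) - ((W n).count a : ℝ)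
        = (((u.count a : ℝ)) - ((W m).count a : ℝ)) + (((v.count a : ℝ)) - ((W n).count a : ℝ))
        from by ring]
    calc |_ + _| ≤ _ + _ := abs_add_le _ _
      _ ≤ C + C := add_le_add h1.le h2.le
      _ = 2*C := by ring
  -- letter frequencies
  have halpha : ∀ a : A, ∃ α : ℝ, ∀ n : ℕ, |((W n).count a : ℝ) - α * n| ≤ 2*C :=
    fun a => aux_almost_additive (fun n => ((W n).count a : ℝ)) (2*C) (hkey a)
  choose α hα using halpha
  -- uniform count bound
  have hcount : ∀ w : List A, InLanguage τ w → ∀ a : A,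
      |((w.count a : ℝ)) - α a * w.length| ≤ 3*C := by
    intro w hw a
    have h1 := hbal w (W w.length) hw (hWlang _) (by rw [hWlen]) a
    have h2 := hα a w.length
    calc |((w.count a : ℝ)) - α a * w.length|
        ≤ |((w.count a : ℝ)) - ((W w.length).count a : ℝ)|
          + |((W w.length).count a : ℝ) - α a * w.length| := abs_sub_le _ _ _
      _ ≤ C + 2*C := add_le_add h1.le h2
      _ = 3*C := by ring
  have hαnn : ∀ a, 0 ≤ α a := by
    intro a
    apply aux_nonneg_of (α a) (2*C)
    intro n
    have h1 := (abs_le.mp (hα a n)).2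
    have h0 : (0:ℝ) ≤ ((W n).count a : ℝ) := Nat.cast_nonneg _
    linarith
  -- sum of frequencies is 1
  have hsumα : ∑ a : A, α a = 1 := by
    have hz : (∑ a : A, α a) - 1 = 0 := by
      apply aux_eq_zero _ (2*C*(Fintype.card A))
      intro n
      have hsum : ∑ a : A, ((W n).count a : ℝ) = (n:ℝ) := by
        rw [← Nat.cast_sum]
        norm_cast
        rw [aux_sum_count, hWlen]
      have heq : |(∑ a : A, α a) - 1| * n = |(∑ a : A, (α a * n - ((W n).count a : ℝ)))| := by
        rw [Finset.sum_sub_distrib, ← Finset.sum_mul, hsum, ← abs_of_nonneg (Nat.cast_nonneg (α := ℝ) n),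
          ← abs_mul, sub_mul, one_mul, abs_of_nonneg (Nat.cast_nonneg (α := ℝ) n)]
      rw [heq]
      calc |(∑ a : A, (α a * n - ((W n).count a : ℝ)))|
          ≤ ∑ a : A, |α a * n - ((W n).count a : ℝ)| := Finset.abs_sum_le_sum_abs _ _
        _ ≤ ∑ _a : A, 2*C := Finset.sum_le_sum fun a _ => by
            rw [abs_sub_comm]; exact hα a n
        _ = 2*C*(Fintype.card A) := by
            rw [Finset.sum_const, Finset.card_univ, nsmul_eq_mul]; ring
    linarith
  -- the linear growth rate and deviation bound
  set L : ℝ := ∑ a : A, α a * ((τ a).length : ℝ) with hLdef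
  have hL0 : 0 ≤ L := Finset.sum_nonneg fun a _ => mul_nonneg (hαnn a) (Nat.cast_nonneg _)
  set D' : ℝ := 3*C * (∑ a : A, ((τ a).length : ℝ)) with hD'def
  have hD'0 : 0 ≤ D' := by
    apply mul_nonneg (by linarith)
    exact Finset.sum_nonneg fun a _ => Nat.cast_nonneg _
  have hτlen : ∀ w : List A, InLanguage τ w →
      |((wordApply τ w).length : ℝ) - L * w.length| ≤ D' := by
    intro w hw
    have hlw : ((wordApply τ w).length : ℝ)
        = ∑ a : A, ((w.count a : ℝ)) * ((τ a).length : ℝ) := by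
      rw [aux_length_wordApply]
      push_cast
      rfl
    have hLn : L * (w.length : ℝ) = ∑ a : A, (α a * w.length) * ((τ a).length : ℝ) := by
      rw [hLdef, Finset.sum_mul]
      exact Finset.sum_congr rfl fun a _ => by ring
    rw [hlw, hLn, ← Finset.sum_sub_distrib]
    calc |∑ a : A, (((w.count a : ℝ)) * ((τ a).length : ℝ)
            - (α a * w.length) * ((τ a).length : ℝ))|
        ≤ ∑ a : A, |((w.count a : ℝ)) * ((τ a).length : ℝ)
            - (α a * w.length) * ((τ a).length : ℝ)| := Finset.abs_sum_le_sum_abs _ _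
      _ ≤ ∑ a : A, 3*C * ((τ a).length : ℝ) := by
          refine Finset.sum_le_sum fun a _ => ?_
          rw [← sub_mul, abs_mul, abs_of_nonneg (Nat.cast_nonneg (α := ℝ) (τ a).length)]
          exact mul_le_mul_of_nonneg_right (hcount w hw a) (Nat.cast_nonneg _)
      _ = D' := by rw [hD'def, Finset.mul_sum]
  -- eigenvector equation for the frequency vector
  have heig : ∀ b : A, ∑ a : A, α a * ((τ a).count b : ℝ) = L * α b := by
    intro b
    apply sub_eq_zero.mp
    apply aux_eq_zero _ (2*C*(∑ a : A, ((τ a).count b : ℝ)) + 3*C + |α b| * D')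
    intro n
    set w : List A := wordApply τ (W n) with hw_def
    have hwlang : InLanguage τ w := aux_lang_wordApply (hWlang n)
    set y : ℝ := ((w.count b : ℝ)) with hy_def
    set l : ℝ := ((w.length : ℝ)) with hl_def
    have e1 : |y - α b * l| ≤ 3*C := hcount w hwlang b
    have e2 : |l - L * n| ≤ D' := by
      have h2 := hτlen (W n) (hWlang n)
      rwa [hWlen] at h2
    have e3 : y = ∑ a : A, ((W n).count a : ℝ) * ((τ a).count b : ℝ) := by
      rw [hy_def, hw_def, aux_count_wordApply]
      push_cast
      rfl
    have e4 : ∀ a : A, |α a * n - ((W n).count a : ℝ)| ≤ 2*C := fun a => by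
      rw [abs_sub_comm]; exact hα a n
    have hsplit : (∑ a : A, (α a * n - ((W n).count a : ℝ)) * ((τ a).count b : ℝ))
        = (∑ a : A, α a * ((τ a).count b : ℝ)) * n - y := by
      rw [e3, Finset.sum_mul, ← Finset.sum_sub_distrib]
      exact Finset.sum_congr rfl fun a _ => by ring
    have hxn : ((∑ a : A, α a * ((τ a).count b : ℝ)) - L * α b) * (n:ℝ)
        = ((∑ a : A, α a * ((τ a).count b : ℝ)) * n - y) + (y - α b * l)
          + (α b * (l - L * n)) := by ring
    rw [← abs_of_nonneg (Nat.cast_nonneg (α := ℝ) n), ← abs_mul, hxn]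
    have hb1 : |(∑ a : A, α a * ((τ a).count b : ℝ)) * n - y|
        ≤ 2*C*(∑ a : A, ((τ a).count b : ℝ)) := by
      rw [← hsplit]
      calc |∑ a : A, (α a * n - ((W n).count a : ℝ)) * ((τ a).count b : ℝ)|
          ≤ ∑ a : A, |(α a * n - ((W n).count a : ℝ)) * ((τ a).count b : ℝ)| :=
            Finset.abs_sum_le_sum_abs _ _
        _ ≤ ∑ a : A, 2*C * ((τ a).count b : ℝ) := by
            refine Finset.sum_le_sum fun a _ => ?_
            rw [abs_mul, abs_of_nonneg (Nat.cast_nonneg (α := ℝ) ((τ a).count b))]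
            exact mul_le_mul_of_nonneg_right (e4 a) (Nat.cast_nonneg _)
        _ = 2*C*(∑ a : A, ((τ a).count b : ℝ)) := by rw [Finset.mul_sum]
    have hb3 : |α b * (l - L * n)| ≤ |α b| * D' := by
      rw [abs_mul]
      exact mul_le_mul_of_nonneg_left e2 (abs_nonneg _)
    calc |_ + _ + _| ≤ |_ + _| + |α b * (l - L * n)| := abs_add_le _ _
      _ ≤ (|(∑ a : A, α a * ((τ a).count b : ℝ)) * n - y| + |y - α b * l|)
          + |α b * (l - L * n)| := add_le_add_left (abs_add_le _ _) _
      _ ≤ (2*C*(∑ a : A, ((τ a).count b : ℝ)) + 3*C) + |α b| * D' := by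
          exact add_le_add (add_le_add hb1 e1) hb3
      _ = 2*C*(∑ a : A, ((τ a).count b : ℝ)) + 3*C + |α b| * D' := by ring
  -- L is a spectral value
  have hLspec : (L : ℂ) ∈ specC τ := by
    apply aux_mem_of_left_eigvec τ (L : ℂ) (fun a => (α a : ℂ))
    · intro h0
      have hz : ∀ a : A, α a = 0 := fun a => by
        have h2 : (α a : ℂ) = 0 := by simpa using congrFun h0 a
        exact_mod_cast h2
      rw [Finset.sum_congr rfl fun a _ => hz a] at hsumα
      simpa using hsumα
    · intro b
      have hentry : ∀ a : A, ((assocMatrix τ).map (fun k : ℕ => (k : ℂ))) a b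
          = (((τ a).count b : ℕ) : ℂ) := fun a => rfl
      calc ∑ a : A, (α a : ℂ) * ((assocMatrix τ).map (fun k : ℕ => (k : ℂ))) a b
          = ∑ a : A, (α a : ℂ) * (((τ a).count b : ℕ) : ℂ) :=
            Finset.sum_congr rfl fun a _ => by rw [hentry]
        _ = (L : ℂ) * (α b : ℂ) := by exact_mod_cast congrArg (fun x : ℝ => (x : ℂ)) (heig b)
  -- conclude L = lam
  have hLlam : L = lam := by
    by_contra hne
    have hLne : (L : ℂ) ≠ (lam : ℂ) := fun h => hne (by exact_mod_cast h)
    have hLlt : L < lam := by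
      have h2 := hdom.2 (L : ℂ) hLspec hLne
      rwa [Complex.norm_real, Real.norm_eq_abs, abs_of_nonneg hL0] at h2
    have hlam0 : 0 < lam := lt_of_le_of_lt hL0 hLlt
    have hlam1 : 1 < lam := by
      by_cases hcaseeq : μ = (lam : ℂ)
      · rw [hcaseeq, Complex.norm_real, Real.norm_eq_abs, abs_of_pos hlam0] at hμ1
        exact hμ1
      · exact lt_trans hμ1 (hdom.2 μ hμmem hcaseeq)
    obtain ⟨a₁, ha₁⟩ := aux_growth_lower τ (lam : ℂ) hdom.1
    have ha₁' : ∀ n : ℕ, lam ^ n ≤ ((subPow τ n a₁).length : ℝ) := by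
      intro n
      have h2 := ha₁ n
      rwa [Complex.norm_real, Real.norm_eq_abs, abs_of_pos hlam0] at h2
    set K : ℝ := max L 1 with hKdef
    have hK1 : 1 ≤ K := le_max_right _ _
    have hK0 : 0 < K := lt_of_lt_of_le one_pos hK1
    have hup : ∀ n : ℕ, ((subPow τ n a₁).length : ℝ) ≤ K^n * (1 + D' * n) := by
      intro n
      induction n with
      | zero => simp [subPow]
      | succ n ih =>
        have hstep := hτlen (subPow τ n a₁) (aux_lang_subPow τ n a₁)
        have heq2 : (subPow τ (n+1) a₁) = wordApply τ (subPow τ n a₁) := rfl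
        rw [heq2]
        have h1 : ((wordApply τ (subPow τ n a₁)).length : ℝ)
            ≤ L * ((subPow τ n a₁).length : ℝ) + D' := by
          have h3 := (abs_le.mp hstep).2
          linarith
        have hlen0 : (0:ℝ) ≤ ((subPow τ n a₁).length : ℝ) := Nat.cast_nonneg _
        have h2 : L * ((subPow τ n a₁).length : ℝ) ≤ K * (K^n * (1 + D' * n)) :=
          mul_le_mul (le_max_left L 1) ih hlen0 (le_of_lt hK0)
        have h3 : (1:ℝ) ≤ K^(n+1) := one_le_pow₀ hK1
        push_cast
        calc ((wordApply τ (subPow τ n a₁)).length : ℝ)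
            ≤ L * ((subPow τ n a₁).length : ℝ) + D' := h1
          _ ≤ K * (K^n * (1 + D' * n)) + D' := by linarith
          _ ≤ K^(n+1) * (1 + D' * n) + D' * K^(n+1) := by
              have he : K * (K^n * (1 + D' * n)) = K^(n+1) * (1 + D' * n) := by
                rw [pow_succ]; ring
              have h4 : D' ≤ D' * K^(n+1) := le_mul_of_one_le_right hD'0 h3
              linarith
          _ = K^(n+1) * (1 + D' * ((n:ℝ)+1)) := by ring
    have hKlam : K < lam := max_lt hLlt hlam1
    set r : ℝ := lam / K with hrdef
    have hr1 : 1 < r := (one_lt_div hK0).mpr hKlam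
    have hrn : ∀ n : ℕ, r^n ≤ 1 + D' * n := by
      intro n
      have h1 := le_trans (ha₁' n) (hup n)
      have h2 : r^n * K^n = lam^n := by
        rw [← mul_pow, hrdef, div_mul_cancel₀ _ (ne_of_gt hK0)]
      have hKn : (0:ℝ) < K^n := pow_pos hK0 n
      have h3 : r^n * K^n ≤ (1 + D' * n) * K^n := by
        rw [h2]
        calc lam^n ≤ K^n * (1 + D' * n) := h1
          _ = (1 + D' * n) * K^n := by ring
      exact le_of_mul_le_mul_right h3 hKn
    obtain ⟨m, hm⟩ := exists_nat_gt (max 1 (2*D' / (r-1)^2))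
    have hm1 : (1:ℝ) < m := lt_of_le_of_lt (le_max_left _ _) hm
    have hr0 : (0:ℝ) < r - 1 := by linarith
    have hmD : 2*D' < m * (r-1)^2 := by
      have h2 := lt_of_le_of_lt (le_max_right _ _) hm
      rw [div_lt_iff₀ (by positivity)] at h2
      linarith
    have hber : 1 + (m:ℝ) * (r-1) ≤ r^m := by
      have h2 := one_add_mul_le_pow (show (-2:ℝ) ≤ r-1 by linarith) m
      have he : 1 + (r - 1) = r := by ring
      rwa [he] at h2
    have hber0 : (0:ℝ) ≤ 1 + (m:ℝ) * (r-1) := by nlinarith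
    have hpow : r^(2*m) = (r^m)^2 := by rw [mul_comm, pow_mul]
    have hA : (1 + (m:ℝ) * (r-1))^2 ≤ r^(2*m) := by
      rw [hpow]
      exact pow_le_pow_left₀ hber0 hber 2
    have hfinal := hrn (2*m)
    push_cast at hfinal
    nlinarith [hA, hfinal, hmD, hm1, hr0,
      mul_lt_mul_of_pos_left hmD (show (0:ℝ) < m by linarith)]
  -- finish
  refine ⟨⌈D'⌉₊, fun w hw => ?_⟩
  have h2 := hτlen w hw
  rw [hLlam] at h2
  exact h2.trans (Nat.le_ceil D')
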